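/- Every homogeneous polynomial P ∈ ℝ[x_1, …, x_n] of degree m admits a decomposition P = ∑_{j=0}^{⌊m/2⌋} (x_1² + ⋯ + x_n²)^j · H_j, where each H_j ∈ ℝ[x_1, …, x_n] is a harmonic homogeneous polynomial of degree m − 2j (harmonic meaning ΔH_j = 0, where Δ = ∑_{i=1}^n ∂²/∂x_i² is the Laplacian). Moreover this decomposition is unique: the polynomials H_j are uniquely determined by P. (Consequently, on the unit sphere, the space of degree-m homogeneous polynomials equals the direct sum of the restricted spaces of harmonic homogeneous polynomials of degrees m, m−2, m−4, ….) -/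

import Mathlib

open scoped BigOperators
open MvPolynomial

/-- The (formal) Laplacian `ΔQ = ∑ i, ∂²Q/∂x_i²` of a multivariate polynomial. -/
noncomputable def polyLaplacian {n : ℕ} (Q : MvPolynomial (Fin n) ℝ) :
    MvPolynomial (Fin n) ℝ :=
  ∑ i, pderiv i (pderiv i Q)


noncomputable def lapLM (n : ℕ) : MvPolynomial (Fin n) ℝ →ₗ[ℝ] MvPolynomial (Fin n) ℝ :=
  ∑ i, ((pderiv i : Derivation ℝ _ _).toLinearMap).comp (pderiv i : Derivation ℝ _ _).toLinearMap

lemma polyLaplacian_eq (Q : MvPolynomial (Fin n) ℝ) : polyLaplacian Q = lapLM n Q := by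
  simp [polyLaplacian, lapLM, LinearMap.sum_apply]

noncomputable def r2 (n : ℕ) : MvPolynomial (Fin n) ℝ := ∑ i, X i ^ 2

lemma r2_isHomogeneous : (r2 n).IsHomogeneous 2 :=
  MvPolynomial.IsHomogeneous.sum _ _ _ fun i _ => isHomogeneous_X_pow i 2

lemma weight_one_single (i : Fin n) : (Finsupp.weight (1 : Fin n → ℕ)) (Finsupp.single i 1) = 1 := by
  rw [Finsupp.weight_apply, Finsupp.sum_single_index] <;> simp

lemma IsHomog.pderiv' {m : ℕ} {P : MvPolynomial (Fin n) ℝ} (h : P.IsHomogeneous m) (i : Fin n) :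
    (pderiv i P).IsHomogeneous (m - 1) := by
  conv_lhs => rw [← P.support_sum_monomial_coeff, map_sum]
  apply MvPolynomial.IsHomogeneous.sum
  intro s hs
  rw [pderiv_monomial]
  rcases Nat.eq_zero_or_pos (s i) with h0 | h0
  · simp [h0]
    exact isHomogeneous_zero _ _ _
  · apply isHomogeneous_monomial
    have hle : Finsupp.single i 1 ≤ s := by
      rw [Finsupp.single_le_iff]; exact h0
    have hdeg : (Finsupp.weight (1 : Fin n → ℕ)) s = m := h (MvPolynomial.mem_support_iff.mp hs)
    have h1 : (Finsupp.weight (1 : Fin n → ℕ)) (s - Finsupp.single i 1)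
        + (Finsupp.weight (1 : Fin n → ℕ)) (Finsupp.single i 1)
        = (Finsupp.weight (1 : Fin n → ℕ)) s := by
      rw [← map_add, tsub_add_cancel_of_le hle]
    rw [weight_one_single] at h1
    rw [Finsupp.degree_eq_weight_one]
    show (Finsupp.weight (1 : Fin n → ℕ)) (s - Finsupp.single i 1) = m - 1
    omega

-- Euler's identity
lemma euler {m : ℕ} (P : MvPolynomial (Fin n) ℝ) (hP : P.IsHomogeneous m) :
    ∑ i, X i * pderiv i P = (m : ℝ) • P := by
  have key : ∀ s : Fin n →₀ ℕ, ∀ a : ℝ, ∀ i : Fin n,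
      X i * pderiv i (monomial s a) = monomial s (a * (s i : ℝ)) := by
    intro s a i
    rw [pderiv_monomial, X, monomial_mul]
    rcases Nat.eq_zero_or_pos (s i) with h0 | h0
    · simp [h0]
    · have hle : Finsupp.single i 1 ≤ s := by rw [Finsupp.single_le_iff]; exact h0
      rw [add_tsub_cancel_of_le hle, one_mul]
  conv_lhs => rw [← P.support_sum_monomial_coeff]
  conv_rhs => rw [← P.support_sum_monomial_coeff]
  rw [Finset.smul_sum]
  simp only [map_sum, Finset.mul_sum]
  rw [Finset.sum_comm]
  apply Finset.sum_congr rfl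
  intro s hs
  simp only [key]
  rw [← Finset.sum_congr rfl (fun i _ => rfl)]  -- no-op
  have hws : (∑ i, (s i : ℕ)) = m := by
    have hdeg : (Finsupp.weight (1 : Fin n → ℕ)) s = m := hP (MvPolynomial.mem_support_iff.mp hs)
    rw [Finsupp.weight_apply, Finsupp.sum_fintype] at hdeg
    · simpa using hdeg
    · intro i; simp
  rw [← map_sum (monomial s) _ Finset.univ, ← Finset.mul_sum, smul_monomial]
  congr 1
  rw [smul_eq_mul, mul_comm, ← hws]
  push_cast
  rfl

lemma pderiv_r2 (i : Fin n) : pderiv i (r2 n) = 2 * X i := by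
  rw [r2, map_sum]
  rw [Finset.sum_eq_single i]
  · rw [pow_two, Derivation.leibniz, pderiv_X_self]; ring_nf
  · intro j _ hj
    rw [pow_two, Derivation.leibniz, pderiv_X_of_ne hj]; simp
  · simp

lemma lap_r2_mul {d : ℕ} (Q : MvPolynomial (Fin n) ℝ) (hQ : Q.IsHomogeneous d) :
    polyLaplacian (r2 n * Q) = r2 n * polyLaplacian Q + ((2 * n + 4 * d : ℕ) : ℝ) • Q := by
  have step : ∀ i : Fin n, pderiv i (pderiv i (r2 n * Q)) =
      2 * Q + 4 * (X i * pderiv i Q) + r2 n * pderiv i (pderiv i Q) := by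
    intro i
    rw [Derivation.leibniz, pderiv_r2, smul_eq_mul, smul_eq_mul, map_add, Derivation.leibniz,
      Derivation.leibniz, pderiv_r2]
    simp only [smul_eq_mul, map_mul]
    rw [Derivation.leibniz, pderiv_X_self]
    have h2 : (pderiv i) (2 : MvPolynomial (Fin n) ℝ) = 0 := by
      have := Derivation.map_natCast (pderiv (R := ℝ) i) 2
      simpa using this
    simp only [smul_eq_mul, h2]
    ring
  rw [polyLaplacian]
  simp only [step]
  rw [Finset.sum_add_distrib, Finset.sum_add_distrib, ← Finset.mul_sum, ← Finset.mul_sum,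
    euler Q hQ, Finset.sum_const, Finset.card_univ, Fintype.card_fin, polyLaplacian]
  rw [nsmul_eq_mul]
  simp only [MvPolynomial.smul_eq_C_mul]
  push_cast
  simp only [map_add, map_mul, map_ofNat, MvPolynomial.C_eq_coe_nat, Finset.mul_sum]
  ring

lemma lap_smul (c : ℝ) (Q : MvPolynomial (Fin n) ℝ) :
    polyLaplacian (c • Q) = c • polyLaplacian Q := by
  rw [polyLaplacian_eq, polyLaplacian_eq, map_smul]

lemma lap_sub (P Q : MvPolynomial (Fin n) ℝ) :
    polyLaplacian (P - Q) = polyLaplacian P - polyLaplacian Q := by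
  rw [polyLaplacian_eq, polyLaplacian_eq, polyLaplacian_eq, map_sub]

lemma lap_sum {ι : Type*} (s : Finset ι) (f : ι → MvPolynomial (Fin n) ℝ) :
    polyLaplacian (∑ i ∈ s, f i) = ∑ i ∈ s, polyLaplacian (f i) := by
  rw [polyLaplacian_eq, map_sum]
  exact Finset.sum_congr rfl fun i _ => (polyLaplacian_eq (f i)).symm

lemma lap_r2_pow_mul (j d : ℕ) (H : MvPolynomial (Fin n) ℝ) (hH : H.IsHomogeneous d)
    (hharm : polyLaplacian H = 0) :
    polyLaplacian (r2 n ^ (j + 1) * H)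
      = ((2 * (j + 1) * (n + 2 * d + 2 * j) : ℕ) : ℝ) • (r2 n ^ j * H) := by
  induction j with
  | zero =>
    rw [pow_one, lap_r2_mul H hH, hharm, mul_zero, zero_add, pow_zero, one_mul]
    norm_num
    ring_nf
  | succ j ih =>
    have hpow : (r2 n ^ (j + 1) * H).IsHomogeneous (2 * (j + 1) + d) :=
      ((r2_isHomogeneous).pow (j + 1)).mul hH
    rw [pow_succ, mul_comm (r2 n ^ (j+1)) (r2 n), mul_assoc, lap_r2_mul _ hpow, ih,
      mul_smul_comm, ← mul_assoc, ← pow_succ']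
    rw [← add_smul]
    congr 1
    push_cast
    ring

lemma pderiv_eq_zero_of_homog_zero {P : MvPolynomial (Fin n) ℝ} (h : P.IsHomogeneous 0)
    (i : Fin n) : pderiv i P = 0 := by
  conv_lhs => rw [← P.support_sum_monomial_coeff, map_sum]
  apply Finset.sum_eq_zero
  intro s hs
  have h0 : (Finsupp.weight (1 : Fin n → ℕ)) s = 0 := h (MvPolynomial.mem_support_iff.mp hs)
  have hsi : s i = 0 := by
    rw [Finsupp.weight_apply, Finsupp.sum_fintype (h := fun i => by simp)] at h0
    have := Finset.sum_eq_zero_iff.mp h0 i (Finset.mem_univ i)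
    simpa using this
  rw [pderiv_monomial, hsi]
  simp

lemma lap_eq_zero_of_low {m : ℕ} (hm : m ≤ 1) {P : MvPolynomial (Fin n) ℝ}
    (hP : P.IsHomogeneous m) : polyLaplacian P = 0 := by
  rw [polyLaplacian]
  apply Finset.sum_eq_zero
  intro i _
  have h1 : (pderiv i P).IsHomogeneous 0 := by
    have := IsHomog.pderiv' hP i
    interval_cases m <;> simpa using this
  rw [pderiv_eq_zero_of_homog_zero h1]

lemma lap_zero : polyLaplacian (0 : MvPolynomial (Fin n) ℝ) = 0 := by
  rw [polyLaplacian_eq, map_zero]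

lemma homog_smul {m : ℕ} {P : MvPolynomial (Fin n) ℝ} (h : P.IsHomogeneous m) (c : ℝ) :
    (c • P).IsHomogeneous m := by
  rw [MvPolynomial.smul_eq_C_mul]; exact h.C_mul c

lemma uniq (hn : 1 ≤ n) (m : ℕ) : ∀ (G : ℕ → MvPolynomial (Fin n) ℝ),
    (∀ j ≤ m / 2, (G j).IsHomogeneous (m - 2 * j) ∧ polyLaplacian (G j) = 0) →
    (∑ j ∈ Finset.range (m / 2 + 1), r2 n ^ j * G j) = 0 → ∀ j ≤ m / 2, G j = 0 := by
  induction m using Nat.strong_induction_on with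
  | _ m ih =>
  intro G hG hsum j hj
  rcases lt_or_ge m 2 with hm | hm
  · have h2 : m / 2 = 0 := by omega
    have hj0 : j = 0 := by omega
    rw [h2] at hsum
    rw [zero_add, Finset.sum_range_one, pow_zero, one_mul] at hsum
    subst hj0; exact hsum
  · obtain ⟨k, rfl⟩ : ∃ k, m = k + 2 := ⟨m - 2, by omega⟩
    have hdiv : (k + 2) / 2 = k / 2 + 1 := by omega
    -- the rescaled shifted family
    set c : ℕ → ℕ := fun i => 2 * (i + 1) * (n + 2 * (k - 2 * i) + 2 * i) with hc
    have hcpos : ∀ i, 0 < c i := fun i => Nat.mul_pos (by omega) (by omega)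
    have hGshift : ∀ i ≤ k / 2, (G (i + 1)).IsHomogeneous (k - 2 * i) := by
      intro i hi
      have := (hG (i + 1) (by omega)).1
      have he : k + 2 - 2 * (i + 1) = k - 2 * i := by omega
      rwa [he] at this
    have hlap := congrArg polyLaplacian hsum
    rw [lap_sum, lap_zero, hdiv, Finset.sum_range_succ'] at hlap
    have hterm : ∀ i ∈ Finset.range (k / 2 + 1),
        polyLaplacian (r2 n ^ (i + 1) * G (i + 1))
          = ((c i : ℕ) : ℝ) • (r2 n ^ i * G (i + 1)) := by
      intro i hi
      have hi' : i ≤ k / 2 := by simpa using Nat.lt_succ_iff.mp (Finset.mem_range.mp hi)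
      rw [lap_r2_pow_mul i (k - 2 * i) _ (hGshift i hi') (hG (i + 1) (by omega)).2]
    rw [Finset.sum_congr rfl hterm] at hlap
    rw [pow_zero, one_mul, (hG 0 (by omega)).2, add_zero] at hlap
    -- apply IH at k
    have hIH := ih k (by omega) (fun i => ((c i : ℕ) : ℝ) • G (i + 1))
      (fun i hi => ⟨homog_smul (hGshift i hi) _, by rw [lap_smul, (hG (i+1) (by omega)).2, smul_zero]⟩)
      (by
        rw [← hlap]
        exact Finset.sum_congr rfl fun i _ => (mul_smul_comm _ _ _))
    have hGzero : ∀ i ≤ k / 2, G (i + 1) = 0 := by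
      intro i hi
      have hz : ((c i : ℕ) : ℝ) • G (i + 1) = 0 := hIH i hi
      have hne : ((c i : ℕ) : ℝ) ≠ 0 := by exact_mod_cast (hcpos i).ne'
      calc G (i + 1) = ((c i : ℕ) : ℝ)⁻¹ • (((c i : ℕ) : ℝ) • G (i + 1)) := by
            rw [smul_smul, inv_mul_cancel₀ hne, one_smul]
        _ = 0 := by rw [hz, smul_zero]
    rcases Nat.eq_zero_or_pos j with rfl | hjpos
    · -- use original sum
      rw [hdiv, Finset.sum_range_succ'] at hsum
      rw [Finset.sum_eq_zero (fun i hi => by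
        rw [hGzero i (by simpa using Nat.lt_succ_iff.mp (Finset.mem_range.mp hi)), mul_zero])] at hsum
      simpa using hsum
    · obtain ⟨i, rfl⟩ : ∃ i, j = i + 1 := ⟨j - 1, by omega⟩
      exact hGzero i (by omega)

lemma lap_homog {m : ℕ} {P : MvPolynomial (Fin n) ℝ} (hP : P.IsHomogeneous m) :
    (polyLaplacian P).IsHomogeneous (m - 2) := by
  rw [polyLaplacian]
  apply MvPolynomial.IsHomogeneous.sum
  intro i _
  have := IsHomog.pderiv' (IsHomog.pderiv' hP i) i
  rwa [Nat.sub_sub] at this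

lemma exist (hn : 1 ≤ n) (m : ℕ) : ∀ (P : MvPolynomial (Fin n) ℝ), P.IsHomogeneous m →
    ∃ G : ℕ → MvPolynomial (Fin n) ℝ,
      (∀ j ≤ m / 2, (G j).IsHomogeneous (m - 2 * j) ∧ polyLaplacian (G j) = 0) ∧
      P = ∑ j ∈ Finset.range (m / 2 + 1), r2 n ^ j * G j := by
  induction m using Nat.strong_induction_on with
  | _ m ih =>
  intro P hP
  rcases lt_or_ge m 2 with hm | hm
  · refine ⟨fun j => if j = 0 then P else 0, ?_, ?_⟩
    · intro j hj
      have hj0 : j = 0 := by omega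
      subst hj0
      simp only [if_pos rfl]
      exact ⟨by simpa using hP, lap_eq_zero_of_low (by omega) hP⟩
    · have h2 : m / 2 = 0 := by omega
      rw [h2, zero_add, Finset.sum_range_one]
      simp
  · obtain ⟨k, rfl⟩ : ∃ k, m = k + 2 := ⟨m - 2, by omega⟩
    have hdiv : (k + 2) / 2 = k / 2 + 1 := by omega
    have hΔ : (polyLaplacian P).IsHomogeneous k := by
      have := lap_homog hP
      simpa using this
    obtain ⟨G', hG', hPsum⟩ := ih k (by omega) _ hΔ
    set c : ℕ → ℕ := fun i => 2 * (i + 1) * (n + 2 * (k - 2 * i) + 2 * i) with hcdef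
    have hcpos : ∀ i, 0 < c i := fun i => Nat.mul_pos (by omega) (by omega)
    have hcne : ∀ i, ((c i : ℕ) : ℝ) ≠ 0 := fun i => by exact_mod_cast (hcpos i).ne'
    set T : ℕ → MvPolynomial (Fin n) ℝ := fun i => ((c i : ℕ) : ℝ)⁻¹ • G' i with hTdef
    have hThomog : ∀ i ≤ k / 2, (T i).IsHomogeneous (k - 2 * i) :=
      fun i hi => homog_smul (hG' i hi).1 _
    have hTharm : ∀ i ≤ k / 2, polyLaplacian (T i) = 0 := fun i hi => by
      rw [hTdef]
      simp only
      rw [lap_smul, (hG' i hi).2, smul_zero]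
    have hTkey : ∀ i ≤ k / 2, polyLaplacian (r2 n ^ (i + 1) * T i) = r2 n ^ i * G' i := by
      intro i hi
      rw [lap_r2_pow_mul i (k - 2 * i) _ (hThomog i hi) (hTharm i hi), hTdef]
      simp only
      rw [mul_smul_comm, smul_smul, mul_inv_cancel₀ (hcne i), one_smul]
    set H : ℕ → MvPolynomial (Fin n) ℝ := fun j =>
      if j = 0 then P - ∑ i ∈ Finset.range (k / 2 + 1), r2 n ^ (i + 1) * T i
      else T (j - 1) with hHdef
    refine ⟨H, ?_, ?_⟩
    · intro j hj
      rcases Nat.eq_zero_or_pos j with rfl | hjpos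
      · constructor
        · simp only [hHdef, if_pos rfl]
          apply MvPolynomial.IsHomogeneous.sub
          · simpa using hP
          · apply MvPolynomial.IsHomogeneous.sum
            intro i hi
            have hi' : i ≤ k / 2 := by
              have := Finset.mem_range.mp hi; omega
            have := ((r2_isHomogeneous).pow (i + 1)).mul (hThomog i hi')
            have he : 2 * (i + 1) + (k - 2 * i) = k + 2 - 2 * 0 := by omega
            rwa [he] at this
        · simp only [hHdef, if_pos rfl]
          rw [lap_sub, lap_sum]
          rw [Finset.sum_congr rfl (fun i hi => hTkey i (by
            have := Finset.mem_range.mp hi; omega))]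
          rw [← hPsum, sub_self]
      · obtain ⟨i, rfl⟩ : ∃ i, j = i + 1 := ⟨j - 1, by omega⟩
        have hi : i ≤ k / 2 := by omega
        have hH : H (i + 1) = T i := by simp [hHdef]
        constructor
        · rw [hH]
          have := hThomog i hi
          have he : k - 2 * i = k + 2 - 2 * (i + 1) := by omega
          rwa [he] at this
        · rw [hH]; exact hTharm i hi
    · rw [hdiv, Finset.sum_range_succ']
      have h1 : ∀ i ∈ Finset.range (k / 2 + 1), r2 n ^ (i + 1) * H (i + 1) = r2 n ^ (i + 1) * T i := by
        intro i _
        simp [hHdef]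
      rw [Finset.sum_congr rfl h1]
      simp only [hHdef, if_pos rfl, pow_zero, one_mul]
      ring

/-- every homogeneous polynomial `P` of degree `m` in `n`
variables decomposes uniquely as `P = ∑_{j=0}^{⌊m/2⌋} (x₁²+⋯+x_n²)^j · H_j`
with each `H_j` a harmonic homogeneous polynomial of degree `m - 2j`. -/
theorem harmonic_decomposition (n m : ℕ) (hn : 1 ≤ n)
    (P : MvPolynomial (Fin n) ℝ) (hP : P.IsHomogeneous m) :
    ∃! H : Fin (m / 2 + 1) → MvPolynomial (Fin n) ℝ,
      (∀ j, (H j).IsHomogeneous (m - 2 * (j : ℕ)) ∧ polyLaplacian (H j) = 0) ∧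
      P = ∑ j : Fin (m / 2 + 1), (∑ i, (X i : MvPolynomial (Fin n) ℝ) ^ 2) ^ (j : ℕ) * H j := by
  obtain ⟨G, hG, hPsum⟩ := exist hn m P hP
  refine ⟨fun j => G (j : ℕ), ⟨?_, ?_⟩, ?_⟩
  · intro j
    exact hG (j : ℕ) (Nat.lt_succ_iff.mp j.isLt)
  · show P = ∑ j : Fin (m / 2 + 1), r2 n ^ (j : ℕ) * G (j : ℕ)
    rw [Fin.sum_univ_eq_sum_range (fun j => r2 n ^ j * G j) (m / 2 + 1)]
    exact hPsum
  · rintro H' ⟨hH'1, hH'2⟩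
    have hH'2' : P = ∑ j : Fin (m / 2 + 1), r2 n ^ (j : ℕ) * H' j := hH'2
    set H'e : ℕ → MvPolynomial (Fin n) ℝ :=
      fun j => if h : j < m / 2 + 1 then H' ⟨j, h⟩ else 0 with hH'e
    have hext : ∀ j : Fin (m / 2 + 1), H'e (j : ℕ) = H' j := by
      intro j
      rw [hH'e]; exact dif_pos j.isLt
    set D : ℕ → MvPolynomial (Fin n) ℝ := fun j => H'e j - G j with hD
    have hcond : ∀ j ≤ m / 2, (D j).IsHomogeneous (m - 2 * j) ∧ polyLaplacian (D j) = 0 := by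
      intro j hj
      have hjlt : j < m / 2 + 1 := by omega
      have h1 : H'e j = H' ⟨j, hjlt⟩ := by rw [hH'e]; exact dif_pos hjlt
      constructor
      · rw [hD]
        simp only
        rw [h1]
        exact ((hH'1 ⟨j, hjlt⟩).1).sub (hG j hj).1
      · rw [hD]
        simp only
        rw [lap_sub, h1, (hH'1 ⟨j, hjlt⟩).2, (hG j hj).2, sub_zero]
    have hsum0 : ∑ j ∈ Finset.range (m / 2 + 1), r2 n ^ j * D j = 0 := by
      have e1 : ∑ j ∈ Finset.range (m / 2 + 1), r2 n ^ j * D j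
          = ∑ j ∈ Finset.range (m / 2 + 1), r2 n ^ j * H'e j
            - ∑ j ∈ Finset.range (m / 2 + 1), r2 n ^ j * G j := by
        rw [← Finset.sum_sub_distrib]
        exact Finset.sum_congr rfl fun j _ => by rw [hD]; simp only; ring
      rw [e1, ← hPsum, ← Fin.sum_univ_eq_sum_range (fun j => r2 n ^ j * H'e j) (m / 2 + 1)]
      rw [Finset.sum_congr rfl (fun j _ => by rw [hext j]), ← hH'2', sub_self]
    have huniq := uniq hn m D hcond hsum0
    funext j
    have := huniq (j : ℕ) (Nat.lt_succ_iff.mp j.isLt)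
    rw [hD] at this
    simp only at this
    rw [hext j] at this
    exact sub_eq_zero.mp this
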